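/- Let δ ∈ (0,1], C ≥ 0, and let h : ℕ → ℝ be a nonnegative sequence satisfying, for every t ≥ 0, h(t+1) ≤ (1 − δ·γ_t)·h(t) + (γ_t²/2)·C where γ_t := 2/(δ·t + 2). Then for every t ≥ 0, h(t) ≤ 2·(C/δ + h(0)) / (δ·t + 2). -/

import Mathlib

/-- Scalar recurrence lemma converting the per-iteration Frank-Wolfe descent inequality
into the sublinear rate of Theorem 1: if `h : ℕ → ℝ` is nonnegative and satisfies
`h(t+1) ≤ (1 - δ γ_t) h(t) + (γ_t²/2) C` with `γ_t = 2/(δt+2)`, `δ ∈ (0,1]`, `C ≥ 0`,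
then `h(t) ≤ 2 (C/δ + h(0)) / (δt + 2)` for every `t`. -/
theorem fw_rate_recurrence
    (δ C : ℝ) (hδ : δ ∈ Set.Ioc (0 : ℝ) 1) (hC : 0 ≤ C)
    (h : ℕ → ℝ) (hnn : ∀ t, 0 ≤ h t)
    (hrec : ∀ t : ℕ, h (t + 1)
        ≤ (1 - δ * (2 / (δ * (t : ℝ) + 2))) * h t
          + ((2 / (δ * (t : ℝ) + 2)) ^ 2 / 2) * C) :
    ∀ t : ℕ, h t ≤ 2 * (C / δ + h 0) / (δ * (t : ℝ) + 2) := by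
  obtain ⟨hδ0, hδ1⟩ := hδ
  set B : ℝ := C / δ + h 0 with hBdef
  have hB : 0 ≤ B := add_nonneg (div_nonneg hC hδ0.le) (hnn 0)
  have hCB : C ≤ δ * B := by
    have h2 : δ * B = C + δ * h 0 := by rw [hBdef]; field_simp
    nlinarith [mul_nonneg hδ0.le (hnn 0)]
  intro t
  induction t with
  | zero =>
    simp only [Nat.cast_zero, mul_zero, zero_add]
    have : 0 ≤ C / δ := div_nonneg hC hδ0.le
    rw [le_div_iff₀ (by norm_num : (0:ℝ) < 2)]
    simp only [hBdef]; linarith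
  | succ t ih =>
    set s : ℝ := δ * (t : ℝ) + 2 with hsdef
    have hs0 : (0 : ℝ) < s := by positivity
    have hs2 : (2 : ℝ) ≤ s := by nlinarith [Nat.cast_nonneg (α := ℝ) t]
    have h1 : 0 ≤ s - 2 * δ := by linarith
    have hihs : h t * s ≤ 2 * B := (le_div_iff₀ hs0).mp ih
    have key := hrec t
    have key2 : h (t + 1) * s ^ 2 ≤ (s - 2 * δ) * h t * s + 2 * C := by
      have hmul := mul_le_mul_of_nonneg_right key (le_of_lt (by positivity : (0:ℝ) < s ^ 2))
      have e1 : ((1 - δ * (2 / s)) * h t + ((2 / s) ^ 2 / 2) * C) * s ^ 2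
          = (s - 2 * δ) * h t * s + 2 * C := by
        field_simp
      linarith [hmul.trans_eq e1]
    have step1 : h (t + 1) * s ^ 2 ≤ 2 * B * (s - δ) := by
      nlinarith [mul_nonneg h1 (by linarith : (0:ℝ) ≤ 2 * B - h t * s)]
    have hden : (0 : ℝ) < δ * ((t : ℝ) + 1) + 2 := by positivity
    have hds : δ * ((t : ℝ) + 1) + 2 = s + δ := by ring
    push_cast
    rw [le_div_iff₀ hden, hds]
    nlinarith [mul_le_mul_of_nonneg_right step1 (by positivity : (0:ℝ) ≤ s + δ),
      mul_nonneg hB (sq_nonneg δ), hs0, pow_pos hs0 2]
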